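/- For two bounded measurable maps and data y, y' with |y|_Σ, |y'|_Σ ≤ r, the posteriors satisfy d_Hell(γ^y, γ^{y'}) ≤ C(r) |y − y'|_Σ, i.e. the posterior depends locally Lipschitz continuously on the data in the Hellinger metric. -/
import Mathlib

open MeasureTheory

/-- `exp` is 1-Lipschitz on nonpositive reals (stated via `exp (-s)`). -/
lemma exp_neg_lipschitz {s t : ℝ} (hs : 0 ≤ s) (ht : 0 ≤ t) :
    |Real.exp (-s) - Real.exp (-t)| ≤ |s - t| := by
  wlog h : s ≤ t generalizing s t
  · rw [abs_sub_comm, abs_sub_comm s t]; exact this ht hs (le_of_not_ge h)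
  have h1 : Real.exp (-s) ≤ 1 := Real.exp_le_one_iff.2 (by linarith)
  have h2 : Real.exp (-t) ≤ Real.exp (-s) := Real.exp_le_exp.2 (by linarith)
  have h3 : -(t - s) + 1 ≤ Real.exp (-(t - s)) := Real.add_one_le_exp _
  have h4 : Real.exp (-t) = Real.exp (-s) * Real.exp (-(t - s)) := by
    rw [← Real.exp_add]; ring_nf
  have h5 : 0 < Real.exp (-s) := Real.exp_pos _
  rw [abs_of_nonneg (by linarith), abs_of_nonpos (by linarith)]
  nlinarith

/-- `sqrt` is Lipschitz away from 0. -/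
lemma sqrt_lip {c x x' : ℝ} (hc : 0 < c) (hx : c ≤ x) (hx' : c ≤ x') :
    |Real.sqrt x - Real.sqrt x'| ≤ |x - x'| / (2 * Real.sqrt c) := by
  have hsc : 0 < Real.sqrt c := Real.sqrt_pos.2 hc
  have h1 : Real.sqrt c ≤ Real.sqrt x := Real.sqrt_le_sqrt hx
  have h2 : Real.sqrt c ≤ Real.sqrt x' := Real.sqrt_le_sqrt hx'
  have hxx : Real.sqrt x ^ 2 = x := Real.sq_sqrt (by linarith)
  have hxx' : Real.sqrt x' ^ 2 = x' := Real.sq_sqrt (by linarith)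
  rw [le_div_iff₀ (by positivity : (0:ℝ) < 2 * Real.sqrt c)]
  have key : |Real.sqrt x - Real.sqrt x'| * (Real.sqrt x + Real.sqrt x') = |x - x'| := by
    rw [← abs_of_nonneg (a := Real.sqrt x + Real.sqrt x') (by positivity), ← abs_mul]
    congr 1; nlinarith
  nlinarith [abs_nonneg (Real.sqrt x - Real.sqrt x'), abs_nonneg (x - x')]

set_option maxHeartbeats 1600000 in
/-- Local Lipschitz continuity of the posterior in the data with respect to the Hellinger
metric: for a bounded measurable forward map `G` and every `r > 0`, there is `C(r) > 0`
such that for all data `y, y'` with `‖y‖, ‖y'‖ ≤ r`, the posteriors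
`dγ^y/dγ = exp(-(1/2)‖y - G u‖²)/Z(y)` satisfy `d_Hell(γ^y, γ^{y'}) ≤ C(r) ‖y - y'‖`. -/
theorem posterior_hellinger_lipschitz_in_data
    {U : Type*} [MeasurableSpace U] (γ : Measure U) [IsProbabilityMeasure γ]
    {E : Type*} [NormedAddCommGroup E] [InnerProductSpace ℝ E] [MeasurableSpace E]
    [BorelSpace E]
    (G : U → E) (hGmeas : Measurable G) (M : ℝ) (hGbdd : ∀ u, ‖G u‖ ≤ M)
    (r : ℝ) (hr : 0 < r) :
    ∃ C : ℝ, 0 < C ∧ ∀ y y' : E, ‖y‖ ≤ r → ‖y'‖ ≤ r →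
      Real.sqrt ((1 / 2) * ∫ u,
          (Real.sqrt (Real.exp (-((1 / 2) * ‖y - G u‖ ^ 2)) /
              (∫ v, Real.exp (-((1 / 2) * ‖y - G v‖ ^ 2)) ∂γ)) -
           Real.sqrt (Real.exp (-((1 / 2) * ‖y' - G u‖ ^ 2)) /
              (∫ v, Real.exp (-((1 / 2) * ‖y' - G v‖ ^ 2)) ∂γ))) ^ 2 ∂γ)
        ≤ C * ‖y - y'‖ := by
  classical
  set L : ℝ := r + |M| with hLdef
  have hL0 : 0 < L := lt_of_lt_of_le hr (le_add_of_nonneg_right (abs_nonneg M))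
  set z0 : ℝ := Real.exp (-(L ^ 2 / 2)) with hz0def
  have hz0 : 0 < z0 := Real.exp_pos _
  have hz0le1 : z0 ≤ 1 := Real.exp_le_one_iff.2 (by nlinarith [sq_nonneg L])
  have hsz0 : 0 < Real.sqrt z0 := Real.sqrt_pos.2 hz0
  have hsz0le1 : Real.sqrt z0 ≤ 1 := by
    simpa using Real.sqrt_le_sqrt hz0le1
  refine ⟨L / (z0 * Real.sqrt z0), by positivity, ?_⟩
  intro y y' hy hy'
  set C : ℝ := L / (z0 * Real.sqrt z0) with hCdef
  set t : ℝ := ‖y - y'‖ with htdef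
  have ht0 : 0 ≤ t := norm_nonneg _
  set f : E → U → ℝ := fun z u => Real.exp (-((1 / 2) * ‖z - G u‖ ^ 2)) with hfdef
  have hnorm_le : ∀ (z : E) (u : U), ‖z‖ ≤ r → ‖z - G u‖ ≤ L := by
    intro z u hz
    calc ‖z - G u‖ ≤ ‖z‖ + ‖G u‖ := norm_sub_le _ _
      _ ≤ r + |M| := add_le_add hz ((hGbdd u).trans (le_abs_self M))
  have hf_pos : ∀ (z : E) (u : U), 0 < f z u := fun z u => Real.exp_pos _
  have hf_le_one : ∀ (z : E) (u : U), f z u ≤ 1 := by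
    intro z u
    exact Real.exp_le_one_iff.2 (by nlinarith [sq_nonneg ‖z - G u‖])
  have hf_lb : ∀ (z : E) (u : U), ‖z‖ ≤ r → z0 ≤ f z u := by
    intro z u hz
    apply Real.exp_le_exp.2
    have := hnorm_le z u hz
    have h2 : ‖z - G u‖ ^ 2 ≤ L ^ 2 := by nlinarith [norm_nonneg (z - G u)]
    nlinarith
  have hf_meas : ∀ z : E, Measurable (f z) := by
    intro z
    have hcont : Continuous fun x : E => Real.exp (-((1 / 2) * ‖z - x‖ ^ 2)) :=
      Real.continuous_exp.comp
        ((continuous_const.mul ((continuous_const.sub continuous_id).norm.pow 2)).neg)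
    exact (hcont.measurable).comp hGmeas
  have hf_int : ∀ z : E, Integrable (f z) γ := by
    intro z
    refine (integrable_const 1).mono' (hf_meas z).aestronglyMeasurable ?_
    filter_upwards with u
    rw [Real.norm_eq_abs, abs_of_pos (hf_pos z u)]
    exact hf_le_one z u
  have hZ_lb : ∀ z : E, ‖z‖ ≤ r → z0 ≤ ∫ u, f z u ∂γ := by
    intro z hz
    have h : z0 = ∫ _u, z0 ∂γ := by simp
    rw [h]
    exact integral_mono (integrable_const _) (hf_int z) (fun u => hf_lb z u hz)
  set Z : ℝ := ∫ u, f y u ∂γ with hZdef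
  set Z' : ℝ := ∫ u, f y' u ∂γ with hZ'def
  have hZ1 : z0 ≤ Z := hZ_lb y hy
  have hZ2 : z0 ≤ Z' := hZ_lb y' hy'
  have hZpos : 0 < Z := lt_of_lt_of_le hz0 hZ1
  have hZ'pos : 0 < Z' := lt_of_lt_of_le hz0 hZ2
  have hPhi_lip : ∀ u : U,
      |(1 / 2) * ‖y - G u‖ ^ 2 - (1 / 2) * ‖y' - G u‖ ^ 2| ≤ L * t := by
    intro u
    have ha : ‖y - G u‖ ≤ L := hnorm_le y u hy
    have hb : ‖y' - G u‖ ≤ L := hnorm_le y' u hy'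
    have habs : |‖y - G u‖ - ‖y' - G u‖| ≤ t := by
      have h := abs_norm_sub_norm_le (y - G u) (y' - G u)
      simpa [htdef, sub_sub_sub_cancel_right] using h
    have h1 := abs_le.1 habs
    have h2 : 0 ≤ ‖y - G u‖ := norm_nonneg _
    have h3 : 0 ≤ ‖y' - G u‖ := norm_nonneg _
    rw [abs_le]
    constructor <;> nlinarith
  have hf_lip : ∀ u : U, |f y u - f y' u| ≤ L * t := by
    intro u
    refine le_trans (exp_neg_lipschitz (by positivity) (by positivity)) ?_
    exact hPhi_lip u
  have hZ_lip : |Z - Z'| ≤ L * t := by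
    rw [hZdef, hZ'def, ← integral_sub (hf_int y) (hf_int y')]
    calc |∫ u, (f y u - f y' u) ∂γ| ≤ ∫ u, |f y u - f y' u| ∂γ := by
          simpa [Real.norm_eq_abs] using
            norm_integral_le_integral_norm (μ := γ) (fun u => f y u - f y' u)
      _ ≤ ∫ _u, L * t ∂γ := by
          refine integral_mono ?_ (integrable_const _) (fun u => hf_lip u)
          exact ((hf_int y).sub (hf_int y')).abs
      _ = L * t := by simp
  have key : ∀ u : U,
      (Real.sqrt (f y u / Z) - Real.sqrt (f y' u / Z')) ^ 2 ≤ (C * t) ^ 2 := by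
    intro u
    have hsZ : 0 < Real.sqrt Z := Real.sqrt_pos.2 hZpos
    have hsZ' : 0 < Real.sqrt Z' := Real.sqrt_pos.2 hZ'pos
    have hsZ1 : Real.sqrt z0 ≤ Real.sqrt Z := Real.sqrt_le_sqrt hZ1
    have hsZ2 : Real.sqrt z0 ≤ Real.sqrt Z' := Real.sqrt_le_sqrt hZ2
    have hsplit : Real.sqrt (f y u / Z) - Real.sqrt (f y' u / Z')
        = (Real.sqrt (f y u) - Real.sqrt (f y' u)) / Real.sqrt Z
          + Real.sqrt (f y' u) * (1 / Real.sqrt Z - 1 / Real.sqrt Z') := by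
      rw [Real.sqrt_div (hf_pos y u).le, Real.sqrt_div (hf_pos y' u).le]
      field_simp
      ring
    have hA : |Real.sqrt (f y u) - Real.sqrt (f y' u)| ≤ L * t / (2 * Real.sqrt z0) := by
      refine le_trans (sqrt_lip hz0 (hf_lb y u hy) (hf_lb y' u hy')) ?_
      gcongr
      exact hf_lip u
    have hsqZ_lip : |Real.sqrt Z - Real.sqrt Z'| ≤ L * t / (2 * Real.sqrt z0) := by
      refine le_trans (sqrt_lip hz0 hZ1 hZ2) ?_
      gcongr
    have hB : |1 / Real.sqrt Z - 1 / Real.sqrt Z'|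
        ≤ L * t / (2 * Real.sqrt z0 * z0) := by
      have heq : 1 / Real.sqrt Z - 1 / Real.sqrt Z'
          = (Real.sqrt Z' - Real.sqrt Z) / (Real.sqrt Z * Real.sqrt Z') := by
        field_simp
      rw [heq, abs_div, abs_of_pos (by positivity : 0 < Real.sqrt Z * Real.sqrt Z')]
      have hden : z0 ≤ Real.sqrt Z * Real.sqrt Z' := by
        calc z0 = Real.sqrt z0 * Real.sqrt z0 := (Real.mul_self_sqrt hz0.le).symm
          _ ≤ Real.sqrt Z * Real.sqrt Z' := mul_le_mul hsZ1 hsZ2 hsz0.le hsZ.le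
      have hnum : |Real.sqrt Z' - Real.sqrt Z| ≤ L * t / (2 * Real.sqrt z0) := by
        rw [abs_sub_comm]; exact hsqZ_lip
      calc |Real.sqrt Z' - Real.sqrt Z| / (Real.sqrt Z * Real.sqrt Z')
          ≤ (L * t / (2 * Real.sqrt z0)) / z0 :=
            div_le_div₀ (by positivity) hnum hz0 hden
        _ = L * t / (2 * Real.sqrt z0 * z0) := by rw [div_div]
    have hsqf' : Real.sqrt (f y' u) ≤ 1 := by
      rw [show (1:ℝ) = Real.sqrt 1 by simp]
      exact Real.sqrt_le_sqrt (hf_le_one y' u)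
    have e1 : |Real.sqrt (f y u) - Real.sqrt (f y' u)| / Real.sqrt Z
        ≤ L * t / (2 * Real.sqrt z0) / Real.sqrt z0 :=
      div_le_div₀ (by positivity) hA hsz0 hsZ1
    have e1' : L * t / (2 * Real.sqrt z0) / Real.sqrt z0 = L * t / (2 * z0) := by
      rw [div_div, mul_assoc, Real.mul_self_sqrt hz0.le]
    have e2 : Real.sqrt (f y' u) * |1 / Real.sqrt Z - 1 / Real.sqrt Z'|
        ≤ 1 * (L * t / (2 * Real.sqrt z0 * z0)) :=
      mul_le_mul hsqf' hB (abs_nonneg _) zero_le_one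
    have e3 : L * t / (2 * z0) ≤ L * t / (2 * (z0 * Real.sqrt z0)) := by
      gcongr
      nlinarith
    have e4 : L * t / (2 * Real.sqrt z0 * z0) = L * t / (2 * (z0 * Real.sqrt z0)) := by
      ring_nf
    have e5 : L * t / (2 * (z0 * Real.sqrt z0)) + L * t / (2 * (z0 * Real.sqrt z0))
        = C * t := by
      rw [hCdef]
      field_simp
      ring
    have habs : |Real.sqrt (f y u / Z) - Real.sqrt (f y' u / Z')| ≤ C * t := by
      rw [hsplit]
      calc |(Real.sqrt (f y u) - Real.sqrt (f y' u)) / Real.sqrt Z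
            + Real.sqrt (f y' u) * (1 / Real.sqrt Z - 1 / Real.sqrt Z')|
          ≤ |(Real.sqrt (f y u) - Real.sqrt (f y' u)) / Real.sqrt Z|
            + |Real.sqrt (f y' u) * (1 / Real.sqrt Z - 1 / Real.sqrt Z')| := abs_add_le _ _
        _ = |Real.sqrt (f y u) - Real.sqrt (f y' u)| / Real.sqrt Z
            + Real.sqrt (f y' u) * |1 / Real.sqrt Z - 1 / Real.sqrt Z'| := by
            rw [abs_div, abs_of_pos hsZ, abs_mul, abs_of_nonneg (Real.sqrt_nonneg _)]
        _ ≤ C * t := by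
            rw [one_mul] at e2
            rw [e1'] at e1
            rw [e4] at e2
            linarith
    calc (Real.sqrt (f y u / Z) - Real.sqrt (f y' u / Z')) ^ 2
        = |Real.sqrt (f y u / Z) - Real.sqrt (f y' u / Z')| ^ 2 := (sq_abs _).symm
      _ ≤ (C * t) ^ 2 := by
          gcongr
  set g : U → ℝ := fun u => (Real.sqrt (f y u / Z) - Real.sqrt (f y' u / Z')) ^ 2
    with hgdef
  have hg_meas : Measurable g := by
    apply Measurable.pow _ measurable_const
    exact (((hf_meas y).div_const Z).sqrt.sub ((hf_meas y').div_const Z').sqrt)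
  have hg_int : Integrable g γ := by
    refine (integrable_const ((C * t) ^ 2)).mono' hg_meas.aestronglyMeasurable ?_
    filter_upwards with u
    rw [Real.norm_eq_abs, abs_of_nonneg (sq_nonneg _)]
    exact key u
  have hint : (∫ u, g u ∂γ) ≤ (C * t) ^ 2 := by
    calc (∫ u, g u ∂γ) ≤ ∫ _u, (C * t) ^ 2 ∂γ :=
          integral_mono hg_int (integrable_const _) key
      _ = (C * t) ^ 2 := by simp
  have hint0 : 0 ≤ ∫ u, g u ∂γ := integral_nonneg (fun u => sq_nonneg _)
  have hhalf : (1 / 2 : ℝ) * (∫ u, g u ∂γ) ≤ (C * t) ^ 2 := by linarith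
  calc Real.sqrt ((1 / 2) * ∫ u, g u ∂γ) ≤ Real.sqrt ((C * t) ^ 2) :=
        Real.sqrt_le_sqrt hhalf
    _ = |C * t| := Real.sqrt_sq_eq_abs _
    _ = C * t := abs_of_nonneg (by positivity)
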